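/- Let F be a field, let α ∈ F have multiplicative order at least n, and let t ≤ n. Let S be a subset of {0,…,n−1} with at most t elements, and let x, x′ : {0,…,n−1} → F be two data vectors that agree at every index outside S. If for every i with 0 ≤ i < t the encoded values agree, i.e. Σ_{j=0}^{n−1} α^(i·j)·x_j = Σ_{j=0}^{n−1} α^(i·j)·x′_j, then x = x′. (Hence the t lost data units on the failed paths are uniquely recoverable from the t encoded combinations together with the surviving plain data.) -/

import Mathlib

/-- If two data vectors agree outside a set `S` of at most `t` indices and
have the same `t` encoded combinations `∑ j, α ^ (i * j) * x j` for `i < t`,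
then they are equal: the lost data units are uniquely recoverable. -/
theorem nps_t_unique_recovery {F : Type*} [Field F] (n t : ℕ) (α : F)
    (hα : ∀ i j : ℕ, i < n → j < n → α ^ i = α ^ j → i = j) (htn : t ≤ n)
    (S : Finset (Fin n)) (hS : S.card ≤ t) (x x' : Fin n → F)
    (hagree : ∀ j : Fin n, j ∉ S → x j = x' j)
    (henc : ∀ i : ℕ, i < t →
      ∑ j : Fin n, α ^ (i * j.1) * x j = ∑ j : Fin n, α ^ (i * j.1) * x' j) :
    x = x' := by
  set d : Fin n → F := fun j => x j - x' j with hd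
  have hdout : ∀ j ∉ S, d j = 0 := fun j hj => sub_eq_zero.mpr (hagree j hj)
  have hsum : ∀ i : ℕ, i < t → ∑ j ∈ S, α ^ (i * j.1) * d j = 0 := by
    intro i hi
    have h1 : ∑ j : Fin n, α ^ (i * j.1) * d j = 0 := by
      simp only [hd, mul_sub, Finset.sum_sub_distrib, henc i hi, sub_self]
    rw [← h1]
    refine (Finset.sum_subset (f := fun j => α ^ (i * j.1) * d j)
      (Finset.subset_univ S) fun j _ hj => ?_)
    rw [hdout j hj, mul_zero]
  set e := S.orderIsoOfFin rfl with he
  set v : Fin S.card → F := fun k => α ^ ((e k : Fin n) : ℕ) with hv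
  have hvinj : Function.Injective v := by
    intro k l h
    have h2 := hα _ _ (e k : Fin n).isLt (e l : Fin n).isLt h
    exact e.injective (Subtype.ext (Fin.ext h2))
  have hdet : (Matrix.vandermonde v).transpose.det ≠ 0 := by
    rw [Matrix.det_transpose, Matrix.det_vandermonde_ne_zero_iff]
    exact hvinj
  set w : Fin S.card → F := fun k => d (e k) with hw
  have hmv : (Matrix.vandermonde v).transpose.mulVec w = 0 := by
    funext i
    have h3 := hsum i (lt_of_lt_of_le i.isLt hS)
    have h4 : ∑ j ∈ S, α ^ ((i : ℕ) * j.1) * d j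
        = ∑ k : Fin S.card, v k ^ (i : ℕ) * w k := by
      rw [← Finset.sum_coe_sort S (fun j => α ^ ((i : ℕ) * j.1) * d j)]
      rw [← Equiv.sum_comp e.toEquiv
        (fun j : S => α ^ ((i : ℕ) * (j : Fin n).1) * d j)]
      refine Finset.sum_congr rfl fun k _ => ?_
      simp [hv, hw, ← pow_mul, mul_comm]
    simp only [Matrix.mulVec, dotProduct, Matrix.transpose_apply,
      Matrix.vandermonde_apply, Pi.zero_apply]
    rw [← h4, h3]
  have hw0 : w = 0 := Matrix.eq_zero_of_mulVec_eq_zero hdet hmv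
  funext j
  by_cases hj : j ∈ S
  · have h5 := congrFun hw0 (e.symm ⟨j, hj⟩)
    simp only [hw, OrderIso.apply_symm_apply, Pi.zero_apply] at h5
    have : d j = 0 := h5
    simpa [hd, sub_eq_zero] using this
  · exact hagree j hj
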